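/- On the ring 𝒟⁻ of pseudo-differential operators over a commutative differential ring (𝒜, D), the adjoint map A ↦ A* is an involutive anti-automorphism: for all A, B ∈ 𝒟⁻ one has (A*)* = A and (A·B)* = B*·A*. -/

import Mathlib

/-!
Pseudo-differential operators of the first type `𝒟⁻` over a commutative
differential ring `(𝒜, D)`.  An operator `A = Σ_{i ∈ ℤ} f_i D^i` (with
`f_i = 0` for all sufficiently large `i`) is encoded by its coefficient
function `f : ℤ → 𝒜`.  Multiplication is determined by
`(f D^i)·(g D^j) = Σ_{r ≥ 0} binom(i,r) f D^r(g) D^{i+j-r}`.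
-/

namespace TwoBKP

/-- The generalized binomial coefficient `binom(i,r) = i(i−1)⋯(i−r+1)/r! ∈ ℤ`
for an integer upper index `i` and `r : ℕ`. -/
noncomputable def zchoose (i : ℤ) (r : ℕ) : ℤ := Ring.choose i r

variable {A : Type*} [CommRing A]

/-- `f : ℤ → 𝒜` represents an element of `𝒟⁻` iff its support is bounded above. -/
def IsPDO (f : ℤ → A) : Prop := ∃ N : ℤ, ∀ i : ℤ, N < i → f i = 0

/-- The product in `𝒟⁻`, coefficientwise: the coefficient of `D^n` in `A·B` is
`Σ_{i+j-r=n, r≥0} binom(i,r) f_i D^r(g_j)`. -/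
noncomputable def pmul (D : A → A) (f g : ℤ → A) : ℤ → A := fun n =>
  ∑ᶠ p : ℤ × ℤ,
    if 0 ≤ p.1 + p.2 - n then
      zchoose p.1 (p.1 + p.2 - n).toNat • (f p.1 * D^[(p.1 + p.2 - n).toNat] (g p.2))
    else 0

/-- The unit `1 = 1·D⁰` of `𝒟⁻`. -/
def pone : ℤ → A := fun n => if n = 0 then (1 : A) else 0

/-- The monomial `D^k` (in particular `pD 1 = D` and `pD (-1) = D⁻¹`). -/
def pD (k : ℤ) : ℤ → A := fun n => if n = k then (1 : A) else 0

/-- The multiplication operator `a·D⁰` attached to `a ∈ 𝒜`. -/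
def sc (a : A) : ℤ → A := fun n => if n = 0 then a else 0

/-- The nonnegative (differential-operator) part `A₊ = Σ_{i≥0} f_i D^i`. -/
def posPart (f : ℤ → A) : ℤ → A := fun n => if 0 ≤ n then f n else 0

/-- The negative part `A₋ = Σ_{i<0} f_i D^i`. -/
def negPart (f : ℤ → A) : ℤ → A := fun n => if n < 0 then f n else 0

/-- The residue `res A = f_{-1}`. -/
def res (f : ℤ → A) : A := f (-1)

/-- The adjoint `A* = Σ_i (−D)^i ∘ f_i` computed in `𝒟⁻`, coefficientwise:
the coefficient of `D^n` in `A*` is `Σ_{i ≥ n} (−1)^i binom(i, i−n) D^{i−n}(f_i)`. -/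
noncomputable def adj (D : A → A) (f : ℤ → A) : ℤ → A := fun n =>
  ∑ᶠ i : ℤ,
    if 0 ≤ i - n then
      ((-1 : ℤ) ^ i.natAbs * zchoose i (i - n).toNat) • D^[(i - n).toNat] (f i)
    else 0

/-- Powers in `𝒟⁻`. -/
noncomputable def ppow (D : A → A) (f : ℤ → A) : ℕ → ℤ → A
  | 0 => pone
  | k + 1 => pmul D f (ppow D f k)

/-- The action of a differential operator `Σ_{i≥0} f_i D^i` on an element of `𝒜`. -/
noncomputable def papply (D : A → A) (f : ℤ → A) (a : A) : A :=
  ∑ᶠ i : ℤ, if 0 ≤ i then f i * D^[i.toNat] a else 0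

/-- Conjugation by `D`:  `A ↦ D·A·D⁻¹`. -/
noncomputable def conjD (D : A → A) (f : ℤ → A) : ℤ → A :=
  pmul D (pD 1) (pmul D f (pD (-1)))

end TwoBKP

/-!
STATEMENT 3.  On `𝒟⁻` the adjoint `A ↦ A*` is an involutive anti-automorphism:
`(A*)* = A` and `(A·B)* = B*·A*`.
-/



open Finset

section Infra
variable {A : Type*} [CommRing A] (D : Derivation ℤ A A)

lemma sum_Icc_eq_range {M : Type*} [AddCommMonoid M] (F : ℤ → M) (a b : ℤ) :
    ∑ m ∈ Finset.Icc a b, F m = ∑ s ∈ Finset.range ((b + 1 - a).toNat), F (a + s) := by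
  apply Finset.sum_nbij' (fun m => (m - a).toNat) (fun s => a + s)
  · intro m hm; simp only [mem_Icc] at hm; simp only [mem_range]; omega
  · intro s hs; simp only [mem_range] at hs; simp only [mem_Icc]; omega
  · intro m hm; simp only [mem_Icc] at hm; omega
  · intro s hs; simp only [mem_range] at hs; omega
  · intro m hm; simp only [mem_Icc] at hm; congr 1; omega

lemma dk_zero (k : ℕ) : (⇑D)^[k] (0 : A) = 0 := by
  induction k with
  | zero => rfl
  | succ k ih => rw [Function.iterate_succ_apply, map_zero, ih]

lemma dk_add (k : ℕ) (x y : A) : (⇑D)^[k] (x + y) = (⇑D)^[k] x + (⇑D)^[k] y := by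
  induction k generalizing x y with
  | zero => rfl
  | succ k ih => rw [Function.iterate_succ_apply, Function.iterate_succ_apply,
      Function.iterate_succ_apply, map_add, ih]

lemma dk_sum {γ : Type*} (k : ℕ) (s : Finset γ) (F : γ → A) :
    (⇑D)^[k] (∑ x ∈ s, F x) = ∑ x ∈ s, (⇑D)^[k] (F x) := by
  classical
  induction s using Finset.induction_on with
  | empty => simp [dk_zero]
  | insert _ _ h ih => rw [Finset.sum_insert h, Finset.sum_insert h, dk_add, ih]

lemma dk_intmul (k : ℕ) (c : ℤ) (x : A) :
    (⇑D)^[k] ((c : A) * x) = (c : A) * (⇑D)^[k] x := by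
  induction k generalizing x with
  | zero => rfl
  | succ k ih =>
    rw [Function.iterate_succ_apply, Function.iterate_succ_apply,
      ← zsmul_eq_mul, map_zsmul, zsmul_eq_mul, ih]

lemma dk_dk (k l : ℕ) (x : A) : (⇑D)^[k] ((⇑D)^[l] x) = (⇑D)^[k + l] x :=
  (Function.iterate_add_apply _ k l x).symm

lemma dk_ite (k : ℕ) (c : Prop) [Decidable c] (x : A) :
    (⇑D)^[k] (if c then x else 0) = if c then (⇑D)^[k] x else 0 := by
  split_ifs <;> simp [dk_zero]

lemma dk_mul (k : ℕ) (a b : A) :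
    (⇑D)^[k] (a * b) =
      ∑ s ∈ range (k + 1), (k.choose s : A) * ((⇑D)^[s] a * (⇑D)^[k - s] b) := by
  induction k with
  | zero => simp
  | succ k ih =>
    rw [Function.iterate_succ_apply', ih, map_sum]
    have step : ∀ s : ℕ, D ((k.choose s : A) * ((⇑D)^[s] a * (⇑D)^[k - s] b)) =
        (k.choose s : A) * ((⇑D)^[s+1] a * (⇑D)^[k - s] b) +
        (k.choose s : A) * ((⇑D)^[s] a * (⇑D)^[(k - s)+1] b) := by
      intro s
      have hc : ((k.choose s : A)) = (((k.choose s : ℤ)) : A) := by push_cast; rfl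
      rw [hc, ← zsmul_eq_mul, map_zsmul, D.leibniz, zsmul_eq_mul]
      simp only [smul_eq_mul, Function.iterate_succ_apply']
      ring
    simp only [step]
    rw [Finset.sum_add_distrib]
    -- target : ∑ t ∈ range (k+2), ((k+1).choose t) * (D^[t] a * D^[k+1-t] b)
    have h1 : ∑ s ∈ range (k + 1), (k.choose s : A) * ((⇑D)^[s+1] a * (⇑D)^[k - s] b)
        = ∑ t ∈ range (k + 2), (if 1 ≤ t then (k.choose (t-1) : A) else 0) *
            ((⇑D)^[t] a * (⇑D)^[k + 1 - t] b) := by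
      rw [Finset.sum_range_succ' (fun t => (if 1 ≤ t then (k.choose (t-1) : A) else 0) *
            ((⇑D)^[t] a * (⇑D)^[k + 1 - t] b)) (k+1)]
      simp only [Nat.le_add_left 1, if_true, Nat.add_sub_cancel, not_le, if_neg,
        Nat.lt_one_iff, zero_mul, add_zero, if_pos]
      apply Finset.sum_congr rfl
      intro s hs; simp only [mem_range] at hs
      have : k + 1 - (s + 1) = k - s := by omega
      rw [this]
    have h2 : ∑ s ∈ range (k + 1), (k.choose s : A) * ((⇑D)^[s] a * (⇑D)^[(k - s)+1] b)
        = ∑ t ∈ range (k + 2), (if t ≤ k then (k.choose t : A) else 0) *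
            ((⇑D)^[t] a * (⇑D)^[k + 1 - t] b) := by
      rw [Finset.sum_range_succ (fun t => (if t ≤ k then (k.choose t : A) else 0) *
            ((⇑D)^[t] a * (⇑D)^[k + 1 - t] b)) (k+1)]
      simp only [Nat.lt_irrefl, if_neg, not_le, Nat.lt_succ_self, zero_mul, add_zero]
      apply Finset.sum_congr rfl
      intro s hs; simp only [mem_range] at hs
      have h : s ≤ k := by omega
      have : k - s + 1 = k + 1 - s := by omega
      rw [this, if_pos h]
    rw [h1, h2, ← Finset.sum_add_distrib]
    apply Finset.sum_congr rfl
    intro t ht; simp only [mem_range] at ht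
    rw [← add_mul]
    congr 1
    rcases Nat.eq_zero_or_pos t with h0 | h0
    · subst h0; simp
    · have h1t : 1 ≤ t := h0
      rcases Nat.lt_or_ge t (k+1) with hk | hk
      · have htk : t ≤ k := by omega
        rw [if_pos h1t, if_pos htk]
        have : (k+1).choose t = k.choose (t-1) + k.choose t := by
          obtain ⟨t', rfl⟩ : ∃ t', t = t' + 1 := ⟨t - 1, by omega⟩
          rw [Nat.choose_succ_succ]; simp [Nat.add_comm]
        rw [this]; push_cast; ring
      · have htk : t = k + 1 := by omega
        subst htk
        rw [if_pos h1t, if_neg (by omega)]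
        simp [Nat.choose_self]

lemma dk_mul_ext (k M : ℕ) (hkM : k ≤ M) (a b : A) :
    (⇑D)^[k] (a * b) =
      ∑ s ∈ range (M + 1),
        if s ≤ k then (k.choose s : A) * ((⇑D)^[s] a * (⇑D)^[k - s] b) else 0 := by
  rw [dk_mul]
  rw [← Finset.sum_subset (Finset.range_subset_range.2 (by omega) :
      range (k+1) ⊆ range (M+1))]
  · apply Finset.sum_congr rfl
    intro s hs; simp only [mem_range] at hs
    rw [if_pos (by omega)]
  · intro s _ hs; simp only [mem_range] at hs
    rw [if_neg (by omega)]

end Infra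

section Binom

lemma rc_mul_rc (x : ℤ) (n k : ℕ) (h : k ≤ n) :
    Ring.choose x k * Ring.choose (x - k) (n - k) = (n.choose k : ℤ) * Ring.choose x n := by
  rw [← Ring.choose_smul_choose x h, nsmul_eq_mul]

lemma vandermonde (x y : ℤ) (S : ℕ) :
    Ring.choose (x + y) S = ∑ u ∈ range (S + 1), Ring.choose x u * Ring.choose y (S - u) := by
  rw [Ring.add_choose_eq S (Commute.all x y), Finset.Nat.sum_antidiagonal_eq_sum_range_succ_mk]

lemma alt_sum (k : ℕ) :
    ∑ r ∈ range (k + 1), (-1 : ℤ)^r * (k.choose r : ℤ) = if k = 0 then 1 else 0 :=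
  Int.alternating_sum_range_choose

lemma inv_coeff (i : ℤ) (m : ℕ) :
    ∑ a ∈ range (m + 1), (-1 : ℤ)^a * (Ring.choose i a * Ring.choose (i - a) (m - a))
      = if m = 0 then 1 else 0 := by
  have : ∀ a ∈ range (m+1), (-1 : ℤ)^a * (Ring.choose i a * Ring.choose (i - a) (m - a))
      = ((-1 : ℤ)^a * (m.choose a : ℤ)) * Ring.choose i m := by
    intro a ha; simp only [mem_range] at ha
    rw [rc_mul_rc i m a (by omega)]; ring
  rw [Finset.sum_congr rfl this, ← Finset.sum_mul, alt_sum]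
  split_ifs with h
  · subst h; simp [Ring.choose_zero_right]
  · simp

lemma I1 (i x : ℤ) (T : ℕ) :
    ∑ r ∈ range (T + 1), (-1 : ℤ)^r * Ring.choose i r * Ring.choose (x - r) (T - r)
      = Ring.choose (x - i) T := by
  have expand : ∀ r ∈ range (T+1),
      (-1 : ℤ)^r * Ring.choose i r * Ring.choose (x - r) (T - r)
      = ∑ w ∈ range (T - r + 1),
          (-1 : ℤ)^r * Ring.choose i r *
            (Ring.choose (i - r) ((T - r) - w) * Ring.choose (x - i) w) := by
    intro r hr
    have : (x - r : ℤ) = (x - i) + (i - r) := by ring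
    rw [this, vandermonde, Finset.mul_sum]
    apply Finset.sum_congr rfl
    intro u hu
    ring
  rw [Finset.sum_congr rfl expand]
  rw [Finset.sum_comm' (s := range (T+1)) (t := fun r => range (T - r + 1))
    (t' := range (T+1)) (s' := fun w => range (T - w + 1))
    (by intro r w; simp only [mem_range]; omega)]
  have inner : ∀ w ∈ range (T+1),
      ∑ r ∈ range (T - w + 1), (-1 : ℤ)^r * Ring.choose i r *
        (Ring.choose (i - r) ((T - r) - w) * Ring.choose (x - i) w)
      = (if T - w = 0 then 1 else 0) * Ring.choose (x - i) w := by
    intro w hw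
    rw [← inv_coeff i (T - w), Finset.sum_mul]
    apply Finset.sum_congr rfl
    intro r hr; simp only [mem_range] at hr
    have : (T - r) - w = (T - w) - r := by omega
    rw [this]; ring
  rw [Finset.sum_congr rfl inner]
  rw [Finset.sum_eq_single T]
  · simp
  · intro w hw hwT; simp only [mem_range] at hw
    rw [if_neg (by omega), zero_mul]
  · intro h; exact absurd (self_mem_range_succ T) h

end Binom

section Ops
open Finset TwoBKP
variable {A : Type*} [CommRing A] (D : Derivation ℤ A A)

lemma eps_cast (i : ℤ) : (-1:ℤ)^i.natAbs = (Int.negOnePow i : ℤ) := by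
  rw [← Int.coe_negOnePow_natCast, Int.natCast_natAbs, Int.negOnePow_abs]

lemma eps_sub_nat (i : ℤ) (a : ℕ) :
    (-1:ℤ)^((i - a).natAbs) * (-1:ℤ)^i.natAbs = (-1:ℤ)^a := by
  rw [eps_cast, eps_cast, ← Units.val_mul, ← Int.negOnePow_add]
  have : i - a + i = 2 * i + (- a) := by ring
  rw [this, Int.negOnePow_add, Int.negOnePow_two_mul, one_mul, Int.negOnePow_neg,
    Int.coe_negOnePow_natCast]

lemma eps_addsub (i j : ℤ) (r : ℕ) :
    (-1:ℤ)^((i + j - r).natAbs) = (-1:ℤ)^i.natAbs * (-1:ℤ)^j.natAbs * (-1:ℤ)^r := by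
  rw [eps_cast, eps_cast, eps_cast, ← Units.val_mul, ← Int.negOnePow_add]
  have : i + j - r = (i + j) + (- r) + (- (2 * r)) + 2*r := by ring
  rw [this, Int.negOnePow_add, Int.negOnePow_two_mul, mul_one, Int.negOnePow_add,
    Int.negOnePow_add, Int.negOnePow_neg, Int.negOnePow_neg, Int.negOnePow_two_mul,
    mul_one, Units.val_mul, Int.coe_negOnePow_natCast]

lemma adj_bound (f : ℤ → A) (N : ℤ) (hN : ∀ i, N < i → f i = 0) :
    ∀ m, N < m → adj ⇑D f m = 0 := by
  intro m hm
  apply finsum_eq_zero_of_forall_eq_zero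
  intro i
  split_ifs with h
  · rw [hN i (by omega), dk_zero, smul_zero]
  · rfl

lemma adj_eq_sum (f : ℤ → A) (N : ℤ) (hN : ∀ i, N < i → f i = 0) (n : ℤ)
    (s : Finset ℤ) (hs : Finset.Icc n N ⊆ s) :
    adj ⇑D f n = ∑ i ∈ s,
      if 0 ≤ i - n then
        ((((-1:ℤ)^i.natAbs * Ring.choose i (i-n).toNat : ℤ)) : A) * (⇑D)^[(i-n).toNat] (f i)
      else 0 := by
  unfold adj
  rw [finsum_eq_sum_of_support_subset _ (s := s)]
  · apply Finset.sum_congr rfl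
    intro i _
    split_ifs with h
    · rw [zsmul_eq_mul]; rfl
    · rfl
  · intro i hi
    simp only [Function.mem_support, Ne] at hi
    by_contra hins
    apply hi
    have hiIcc : i ∉ Finset.Icc n N := fun h => hins (hs h)
    simp only [Finset.mem_Icc, not_and_or, not_le] at hiIcc
    rcases hiIcc with h | h
    · rw [if_neg (by omega)]
    · rw [if_pos, hN i (by omega), dk_zero, smul_zero]
      by_contra hc
      rw [if_neg hc] at hi
      exact hi rfl

lemma pmul_bound (f g : ℤ → A) (Nf Ng : ℤ) (hf : ∀ i, Nf < i → f i = 0)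
    (hg : ∀ i, Ng < i → g i = 0) :
    ∀ m, Nf + Ng < m → pmul ⇑D f g m = 0 := by
  intro m hm
  apply finsum_eq_zero_of_forall_eq_zero
  intro p
  split_ifs with h
  · rcases le_or_gt p.1 Nf with h1 | h1
    · rw [hg p.2 (by omega), dk_zero, mul_zero, smul_zero]
    · rw [hf p.1 (by omega), zero_mul, smul_zero]
  · rfl

lemma pmul_eq_sum (f g : ℤ → A) (Nf Ng : ℤ) (hf : ∀ i, Nf < i → f i = 0)
    (hg : ∀ i, Ng < i → g i = 0) (n : ℤ) (s : Finset (ℤ × ℤ))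
    (hs : Finset.Icc (n - Ng) Nf ×ˢ Finset.Icc (n - Nf) Ng ⊆ s) :
    pmul ⇑D f g n = ∑ p ∈ s,
      if 0 ≤ p.1 + p.2 - n then
        ((Ring.choose p.1 (p.1 + p.2 - n).toNat : ℤ) : A) *
          (f p.1 * (⇑D)^[(p.1 + p.2 - n).toNat] (g p.2))
      else 0 := by
  unfold pmul
  rw [finsum_eq_sum_of_support_subset _ (s := s)]
  · apply Finset.sum_congr rfl
    intro p _
    split_ifs with h
    · rw [zsmul_eq_mul]; rfl
    · rfl
  · intro p hp
    simp only [Function.mem_support, Ne] at hp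
    by_contra hins
    apply hp
    have hpIcc : p ∉ Finset.Icc (n - Ng) Nf ×ˢ Finset.Icc (n - Nf) Ng := fun h => hins (hs h)
    simp only [Finset.mem_product, Finset.mem_Icc, not_and_or, not_le] at hpIcc
    by_cases hc : 0 ≤ p.1 + p.2 - n
    swap
    · rw [if_neg hc]
    rw [if_pos hc]
    have hz : f p.1 = 0 ∨ g p.2 = 0 := by
      rcases hpIcc with (h | h) | (h | h)
      · -- p.1 < n - Ng
        right; apply hg; omega
      · left; exact hf _ h
      · left; apply hf; omega
      · right; exact hg _ h
    rcases hz with h | h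
    · rw [h, zero_mul, smul_zero]
    · rw [h, dk_zero, mul_zero, smul_zero]

lemma sum_Icc_eq_range_desc {M : Type*} [AddCommMonoid M] (F : ℤ → M) (a b : ℤ) :
    ∑ m ∈ Finset.Icc a b, F m = ∑ s ∈ Finset.range ((b + 1 - a).toNat), F (b - s) := by
  apply Finset.sum_nbij' (fun m => (b - m).toNat) (fun s => b - s)
  · intro m hm; simp only [mem_Icc] at hm; simp only [mem_range]; omega
  · intro s hs; simp only [mem_range] at hs; simp only [mem_Icc]; omega
  · intro m hm; simp only [mem_Icc] at hm; omega
  · intro s hs; simp only [mem_range] at hs; omega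
  · intro m hm; simp only [mem_Icc] at hm; congr 1; omega

lemma invo_sum (n N i : ℤ) (hni : n ≤ i) (hiN : i ≤ N) :
    ∑ j ∈ Finset.Icc n N, (if j ≤ i then
      ((-1:ℤ)^j.natAbs * (-1:ℤ)^i.natAbs) *
        (Ring.choose j (j-n).toNat * Ring.choose i (i-j).toNat) else 0)
      = if i = n then 1 else 0 := by
  rw [← Finset.sum_subset (Finset.Icc_subset_Icc_right hiN : Finset.Icc n i ⊆ Finset.Icc n N)
    (by intro j hj hj'; simp only [mem_Icc] at hj hj'; rw [if_neg (by omega)])]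
  rw [Finset.sum_congr rfl (fun j hj => by
    simp only [mem_Icc] at hj; rw [if_pos hj.2])]
  rw [sum_Icc_eq_range_desc]
  have hm : (i + 1 - n).toNat = (i - n).toNat + 1 := by omega
  rw [hm]
  set m := (i - n).toNat with hmdef
  have : ∀ a ∈ range (m + 1),
      ((-1:ℤ)^(i - a).natAbs * (-1:ℤ)^i.natAbs) *
        (Ring.choose (i - a) ((i - a) - n).toNat * Ring.choose i (i - (i - a)).toNat)
      = (-1:ℤ)^a * (Ring.choose i a * Ring.choose (i - a) (m - a)) := by
    intro a ha; simp only [mem_range] at ha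
    rw [eps_sub_nat]
    have h1 : ((i - a) - n).toNat = m - a := by omega
    have h2 : (i - (i - a)).toNat = a := by omega
    rw [h1, h2]; ring
  rw [Finset.sum_congr rfl this, inv_coeff]
  exact if_congr (by omega) rfl rfl


lemma sum3_comm {α β γ M : Type*} [AddCommMonoid M] (s : Finset α) (t : Finset β)
    (u : Finset γ) (F : α → β → γ → M) :
    (∑ x ∈ s, ∑ y ∈ t, ∑ z ∈ u, F x y z) = ∑ y ∈ t, ∑ z ∈ u, ∑ x ∈ s, F x y z := by
  rw [Finset.sum_comm]
  exact Finset.sum_congr rfl fun y _ => Finset.sum_comm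

lemma sum4_comm {α β γ δ M : Type*} [AddCommMonoid M] (s : Finset α) (t : Finset β)
    (u : Finset γ) (v : Finset δ) (F : α → β → γ → δ → M) :
    (∑ x ∈ s, ∑ y ∈ t, ∑ z ∈ u, ∑ w ∈ v, F x y z w)
      = ∑ z ∈ u, ∑ w ∈ v, ∑ x ∈ s, ∑ y ∈ t, F x y z w := by
  rw [Finset.sum_congr rfl fun x _ => sum3_comm t u v (F x)]
  exact sum3_comm s u v (fun x z w => ∑ y ∈ t, F x y z w)

lemma sum_rot4 {α β γ δ M : Type*} [AddCommMonoid M] (s : Finset α) (t : Finset β)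
    (u : Finset γ) (v : Finset δ) (F : α → β → γ → δ → M) :
    (∑ x ∈ s, ∑ y ∈ t, ∑ z ∈ u, ∑ w ∈ v, F x y z w)
      = ∑ y ∈ t, ∑ z ∈ u, ∑ w ∈ v, ∑ x ∈ s, F x y z w := by
  rw [Finset.sum_comm]
  refine Finset.sum_congr rfl fun y _ => ?_
  rw [Finset.sum_comm]
  exact Finset.sum_congr rfl fun z _ => Finset.sum_comm

lemma CL_eval (n N i j : ℤ) (s T : ℕ) (hiN : i ≤ N) (hjN : j ≤ N)
    (hST : i + j - n = (s:ℤ) + T) :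
    ∑ m ∈ Finset.Icc n (2*N), (if 0 ≤ i + j - m ∧ (s:ℤ) ≤ m - n then
        (-1:ℤ)^m.natAbs * Ring.choose m (m-n).toNat * (((m-n).toNat).choose s : ℤ) *
          Ring.choose i (i+j-m).toNat
      else 0)
    = (-1:ℤ)^i.natAbs * (-1:ℤ)^j.natAbs * (Ring.choose (n+s) s * Ring.choose j T) := by
  have hsub : Finset.Icc (n + (s:ℤ)) (i + j) ⊆ Finset.Icc n (2*N) :=
    Finset.Icc_subset_Icc (by omega) (by omega)
  rw [← Finset.sum_subset hsub (fun m hm hm' => by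
    simp only [Finset.mem_Icc] at hm hm'
    rw [if_neg (by omega)])]
  rw [Finset.sum_congr rfl (fun m hm => by
    simp only [Finset.mem_Icc] at hm
    rw [if_pos ⟨by omega, by omega⟩])]
  rw [sum_Icc_eq_range_desc]
  have hT1 : (i + j + 1 - (n + s)).toNat = T + 1 := by omega
  rw [hT1]
  have key : ∀ r ∈ Finset.range (T+1),
      (-1:ℤ)^(i+j-r).natAbs * Ring.choose (i+j-r) ((i+j-r) - n).toNat *
        ((((i+j-r) - n).toNat).choose s : ℤ) * Ring.choose i (i+j-(i+j-(r:ℤ))).toNat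
      = ((-1:ℤ)^i.natAbs * (-1:ℤ)^j.natAbs * Ring.choose (n+s) s) *
          ((-1:ℤ)^r * Ring.choose i r * Ring.choose ((i+j) - (r:ℤ)) (T - r)) := by
    intro r hr; simp only [Finset.mem_range] at hr
    have h1 : ((i+j-r) - n).toNat = s + (T - r) := by omega
    have h2 : (i+j-(i+j-(r:ℤ))).toNat = r := by omega
    rw [h1, h2, eps_addsub]
    have hsym : (s + (T-r)).choose s = (s + (T-r)).choose (T-r) := by
      rw [← Nat.choose_symm (by omega : s ≤ s + (T-r))]
      congr 1; omega
    have e1 : Ring.choose (i+j-(r:ℤ)) (s + (T-r)) * ((s + (T-r)).choose s : ℤ)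
        = Ring.choose (i+j-(r:ℤ)) (T-r) * Ring.choose (n+s) s := by
      rw [hsym]
      have := rc_mul_rc (i+j-(r:ℤ)) (s + (T-r)) (T-r) (by omega)
      rw [show ((i+j-(r:ℤ)) - ((T-r : ℕ):ℤ)) = n + s by omega,
        show (s + (T-r)) - (T-r) = s by omega] at this
      linear_combination (-1 : ℤ) * this
    calc (-1:ℤ)^i.natAbs * (-1:ℤ)^j.natAbs * (-1:ℤ)^r *
          Ring.choose (i+j-(r:ℤ)) (s + (T-r)) * ((s + (T-r)).choose s : ℤ) *
          Ring.choose i r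
        = ((-1:ℤ)^i.natAbs * (-1:ℤ)^j.natAbs * (-1:ℤ)^r * Ring.choose i r) *
          (Ring.choose (i+j-(r:ℤ)) (s + (T-r)) * ((s + (T-r)).choose s : ℤ)) := by ring
      _ = _ := by rw [e1]; ring
  rw [Finset.sum_congr rfl key, ← Finset.mul_sum, I1 i (i+j) T,
    show (i+j-i) = j by ring]
  ring

lemma CR_eval (n N i j : ℤ) (s T : ℕ) (hin : n - N ≤ i) (hiN : i ≤ N) (hjN : j ≤ N)
    (hST : i + j - n = (s:ℤ) + T) :
    ∑ q ∈ Finset.Icc (n - N) N,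
      (if 0 ≤ (n-i+(s:ℤ)) + q - n ∧ 0 ≤ j - (n-i+(s:ℤ)) ∧ 0 ≤ i - q then
        Ring.choose (n-i+(s:ℤ)) ((n-i+(s:ℤ))+q-n).toNat *
          ((-1:ℤ)^j.natAbs * Ring.choose j (j-(n-i+(s:ℤ))).toNat) *
          ((-1:ℤ)^i.natAbs * Ring.choose i (i-q).toNat)
      else 0)
    = (-1:ℤ)^i.natAbs * (-1:ℤ)^j.natAbs * (Ring.choose (n+s) s * Ring.choose j T) := by
  have hsub : Finset.Icc (i - (s:ℤ)) i ⊆ Finset.Icc (n-N) N :=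
    Finset.Icc_subset_Icc (by omega) (by omega)
  rw [← Finset.sum_subset hsub (fun q hq hq' => by
    simp only [Finset.mem_Icc] at hq hq'
    rw [if_neg (by omega)])]
  rw [Finset.sum_congr rfl (fun q hq => by
    simp only [Finset.mem_Icc] at hq
    rw [if_pos ⟨by omega, by omega, by omega⟩])]
  rw [sum_Icc_eq_range_desc]
  have hs1 : (i + 1 - (i - s)).toNat = s + 1 := by omega
  rw [hs1]
  have key : ∀ u ∈ Finset.range (s+1),
      Ring.choose (n-i+(s:ℤ)) ((n-i+(s:ℤ))+(i-(u:ℤ))-n).toNat *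
        ((-1:ℤ)^j.natAbs * Ring.choose j (j-(n-i+(s:ℤ))).toNat) *
        ((-1:ℤ)^i.natAbs * Ring.choose i (i-(i-(u:ℤ))).toNat)
      = ((-1:ℤ)^i.natAbs * (-1:ℤ)^j.natAbs * Ring.choose j T) *
          (Ring.choose i u * Ring.choose (n+(s:ℤ)-i) (s - u)) := by
    intro u hu; simp only [Finset.mem_range] at hu
    have h1 : ((n-i+(s:ℤ))+(i-(u:ℤ))-n).toNat = s - u := by omega
    have h2 : (i-(i-(u:ℤ))).toNat = u := by omega
    have h3 : (j-(n-i+(s:ℤ))).toNat = T := by omega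
    rw [h1, h2, h3, show (n-i+(s:ℤ)) = n+(s:ℤ)-i by ring]
    ring
  rw [Finset.sum_congr rfl key, ← Finset.mul_sum]
  have hv : (∑ u ∈ Finset.range (s+1), Ring.choose i u * Ring.choose (n+(s:ℤ)-i) (s-u))
      = Ring.choose (n+s) s := by
    have := vandermonde i (n+(s:ℤ)-i) s
    rw [show i + (n+(s:ℤ)-i) = n+s by ring] at this
    exact this.symm
  rw [hv]; ring

end Ops

open TwoBKP in
theorem adj_involutive_antiautomorphism {A : Type*} [CommRing A]
    (D : Derivation ℤ A A) (f g : ℤ → A) (hf : IsPDO f) (hg : IsPDO g) :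
    adj ⇑D (adj ⇑D f) = f ∧
    adj ⇑D (pmul ⇑D f g) = pmul ⇑D (adj ⇑D g) (adj ⇑D f) := by
  classical
  obtain ⟨N0, hN0⟩ := hf
  obtain ⟨N1, hN1⟩ := hg
  constructor
  · funext n
    by_cases hnN : n ≤ N0
    swap
    · rw [adj_bound D _ N0 (adj_bound D f N0 hN0) n (by omega), hN0 n (by omega)]
    rw [adj_eq_sum D _ N0 (adj_bound D f N0 hN0) n (Finset.Icc n N0) subset_rfl]
    have step1 : ∀ j ∈ Finset.Icc n N0,
        (if 0 ≤ j - n then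
          ((((-1:ℤ)^j.natAbs * Ring.choose j (j-n).toNat : ℤ)) : A) *
            (⇑D)^[(j-n).toNat] (adj ⇑D f j) else 0)
        = ∑ i ∈ Finset.Icc n N0, (if j ≤ i then
            ((((-1:ℤ)^j.natAbs * (-1:ℤ)^i.natAbs) *
              (Ring.choose j (j-n).toNat * Ring.choose i (i-j).toNat) : ℤ) : A) *
              (⇑D)^[(i-n).toNat] (f i) else 0) := by
      intro j hj
      simp only [Finset.mem_Icc] at hj
      rw [if_pos (by omega)]
      rw [adj_eq_sum D f N0 hN0 j (Finset.Icc n N0)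
        (Finset.Icc_subset_Icc_left hj.1)]
      rw [dk_sum, Finset.mul_sum]
      apply Finset.sum_congr rfl
      intro i _
      rw [dk_ite]
      by_cases hij : 0 ≤ i - j
      · rw [if_pos hij, if_pos (by omega : j ≤ i), dk_intmul, dk_dk]
        have he : (j - n).toNat + (i - j).toNat = (i - n).toNat := by omega
        rw [he]
        push_cast
        ring
      · rw [if_neg hij, if_neg (by omega : ¬ j ≤ i), mul_zero]
    rw [Finset.sum_congr rfl step1, Finset.sum_comm]
    have step2 : ∀ i ∈ Finset.Icc n N0,
        (∑ j ∈ Finset.Icc n N0, if j ≤ i then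
            ((((-1:ℤ)^j.natAbs * (-1:ℤ)^i.natAbs) *
              (Ring.choose j (j-n).toNat * Ring.choose i (i-j).toNat) : ℤ) : A) *
              (⇑D)^[(i-n).toNat] (f i) else 0)
        = (if i = n then (1:A) else 0) * (⇑D)^[(i-n).toNat] (f i) := by
      intro i hi
      simp only [Finset.mem_Icc] at hi
      have : ∀ j ∈ Finset.Icc n N0, (if j ≤ i then
            ((((-1:ℤ)^j.natAbs * (-1:ℤ)^i.natAbs) *
              (Ring.choose j (j-n).toNat * Ring.choose i (i-j).toNat) : ℤ) : A) *
              (⇑D)^[(i-n).toNat] (f i) else 0)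
          = ((if j ≤ i then (((-1:ℤ)^j.natAbs * (-1:ℤ)^i.natAbs) *
              (Ring.choose j (j-n).toNat * Ring.choose i (i-j).toNat)) else 0 : ℤ) : A) *
              (⇑D)^[(i-n).toNat] (f i) := by
        intro j _
        split_ifs with h
        · rfl
        · rw [Int.cast_zero, zero_mul]
      rw [Finset.sum_congr rfl this, ← Finset.sum_mul, ← Int.cast_sum,
        invo_sum n N0 i hi.1 hi.2]
      split_ifs <;> simp
    rw [Finset.sum_congr rfl step2]
    rw [Finset.sum_eq_single n]
    · simp
    · intro i _ hin
      rw [if_neg hin, zero_mul]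
    · intro h
      exact absurd (Finset.mem_Icc.2 ⟨le_refl n, hnN⟩) h
  · -- anti-automorphism
    have hNf : ∀ i, max N0 N1 < i → f i = 0 := fun i hi => hN0 i (by omega)
    have hNg : ∀ i, max N0 N1 < i → g i = 0 := fun i hi => hN1 i (by omega)
    set N : ℤ := max N0 N1 with hNdef
    have pbnd : ∀ m, 2*N < m → pmul ⇑D f g m = 0 :=
      fun m hm => pmul_bound D f g N N hNf hNg m (by omega)
    funext n
    by_cases hn2 : n ≤ 2*N
    swap
    · rw [adj_bound D _ (2*N) pbnd n (by omega),
        pmul_bound D _ _ N N (adj_bound D g N hNg) (adj_bound D f N hNf) n (by omega)]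
    -- LHS expansion
    have L1 : adj ⇑D (pmul ⇑D f g) n = ∑ m ∈ Finset.Icc n (2*N),
        ∑ x ∈ Finset.Icc (n-N) N, ∑ y ∈ Finset.Icc (n-N) N,
          ∑ s ∈ Finset.range ((2*N - n).toNat + 1),
          (if 0 ≤ x + y - m ∧ (s:ℤ) ≤ m - n then
            (((-1:ℤ)^m.natAbs * Ring.choose m (m-n).toNat * (((m-n).toNat).choose s : ℤ) *
              Ring.choose x (x+y-m).toNat : ℤ) : A) *
              ((⇑D)^[s] (f x) * (⇑D)^[(x+y-n).toNat - s] (g y))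
          else 0) := by
      rw [adj_eq_sum D _ (2*N) pbnd n (Finset.Icc n (2*N)) subset_rfl]
      apply Finset.sum_congr rfl
      intro m hm
      simp only [Finset.mem_Icc] at hm
      rw [if_pos (by omega : (0:ℤ) ≤ m - n)]
      rw [pmul_eq_sum D f g N N hNf hNg m
        (Finset.Icc (n-N) N ×ˢ Finset.Icc (n-N) N)
        (Finset.product_subset_product
          (Finset.Icc_subset_Icc (by omega) le_rfl)
          (Finset.Icc_subset_Icc (by omega) le_rfl))]
      rw [Finset.sum_product, dk_sum, Finset.mul_sum]
      apply Finset.sum_congr rfl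
      intro x hx
      rw [dk_sum, Finset.mul_sum]
      apply Finset.sum_congr rfl
      intro y hy
      simp only
      rw [dk_ite]
      by_cases hijm : 0 ≤ x + y - m
      · rw [if_pos hijm, dk_intmul,
          dk_mul_ext D (m-n).toNat ((2*N - n).toNat) (by omega) (f x)
            ((⇑D)^[(x+y-m).toNat] (g y))]
        rw [Finset.mul_sum, Finset.mul_sum]
        apply Finset.sum_congr rfl
        intro s hs
        simp only [Finset.mem_range] at hs
        by_cases hsk : s ≤ (m-n).toNat
        · rw [if_pos hsk, dk_dk, if_pos ⟨hijm, by omega⟩]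
          have he : ((m-n).toNat - s) + (x+y-m).toNat = (x+y-n).toNat - s := by omega
          rw [he]
          push_cast
          ring
        · rw [if_neg hsk, mul_zero, mul_zero, if_neg (by omega)]
      · rw [if_neg hijm, mul_zero]
        exact (Finset.sum_eq_zero fun s _ => if_neg (by omega)).symm
    -- RHS expansion
    have R1 : pmul ⇑D (adj ⇑D g) (adj ⇑D f) n =
        ∑ p1 ∈ Finset.Icc (n-N) N, ∑ p2 ∈ Finset.Icc (n-N) N,
          ∑ a ∈ Finset.Icc (n-N) N, ∑ b ∈ Finset.Icc (n-N) N,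
          (if 0 ≤ p1 + p2 - n ∧ 0 ≤ a - p1 ∧ 0 ≤ b - p2 then
            ((Ring.choose p1 (p1+p2-n).toNat *
              ((-1:ℤ)^a.natAbs * Ring.choose a (a-p1).toNat) *
              ((-1:ℤ)^b.natAbs * Ring.choose b (b-p2).toNat) : ℤ) : A) *
              ((⇑D)^[(a-p1).toNat] (g a) * (⇑D)^[(p1+b-n).toNat] (f b))
          else 0) := by
      rw [pmul_eq_sum D _ _ N N (adj_bound D g N hNg) (adj_bound D f N hNf) n
        (Finset.Icc (n-N) N ×ˢ Finset.Icc (n-N) N) subset_rfl]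
      rw [Finset.sum_product]
      apply Finset.sum_congr rfl
      intro p1 hp1
      simp only [Finset.mem_Icc] at hp1
      apply Finset.sum_congr rfl
      intro p2 hp2
      simp only [Finset.mem_Icc] at hp2
      simp only
      by_cases hpq : 0 ≤ p1 + p2 - n
      · rw [if_pos hpq]
        rw [adj_eq_sum D g N hNg p1 (Finset.Icc (n-N) N)
          (Finset.Icc_subset_Icc (by omega) le_rfl)]
        rw [adj_eq_sum D f N hNf p2 (Finset.Icc (n-N) N)
          (Finset.Icc_subset_Icc (by omega) le_rfl)]
        rw [dk_sum, Finset.sum_mul_sum, Finset.mul_sum]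
        apply Finset.sum_congr rfl
        intro a _
        rw [Finset.mul_sum]
        apply Finset.sum_congr rfl
        intro b _
        rw [dk_ite]
        by_cases h1 : 0 ≤ a - p1
        · by_cases h2 : 0 ≤ b - p2
          · rw [if_pos h1, if_pos h2, dk_intmul, dk_dk, if_pos ⟨hpq, h1, h2⟩]
            have he : (p1+p2-n).toNat + (b-p2).toNat = (p1+b-n).toNat := by omega
            rw [he]
            push_cast
            ring
          · rw [if_neg h2, mul_zero, mul_zero, if_neg (by tauto)]
        · rw [if_neg h1, zero_mul, mul_zero, if_neg (by tauto)]
      · rw [if_neg hpq]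
        exact (Finset.sum_eq_zero fun a _ => Finset.sum_eq_zero fun b _ =>
          if_neg (by tauto)).symm
    rw [L1, R1]
    conv_lhs => rw [sum_rot4]
    conv_rhs => rw [sum4_comm]
    -- now both sides are quadruple sums with outer indices:
    -- LHS : x(=i,f-index), y(=j,g-index), s, m ; RHS : a(=j), b(=i), p1, p2
    rw [Finset.sum_comm]
    apply Finset.sum_congr rfl
    intro j hj
    simp only [Finset.mem_Icc] at hj
    apply Finset.sum_congr rfl
    intro i hi
    simp only [Finset.mem_Icc] at hi
    -- factor the m-sum on the LHS
    have L3 : ∀ s ∈ Finset.range ((2*N - n).toNat + 1),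
        (∑ m ∈ Finset.Icc n (2*N),
          (if 0 ≤ i + j - m ∧ (s:ℤ) ≤ m - n then
            (((-1:ℤ)^m.natAbs * Ring.choose m (m-n).toNat * (((m-n).toNat).choose s : ℤ) *
              Ring.choose i (i+j-m).toNat : ℤ) : A) *
              ((⇑D)^[s] (f i) * (⇑D)^[(i+j-n).toNat - s] (g j))
          else 0))
        = (((∑ m ∈ Finset.Icc n (2*N),
            (if 0 ≤ i + j - m ∧ (s:ℤ) ≤ m - n then
              (-1:ℤ)^m.natAbs * Ring.choose m (m-n).toNat * (((m-n).toNat).choose s : ℤ) *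
                Ring.choose i (i+j-m).toNat
            else 0)) : ℤ) : A) *
            ((⇑D)^[s] (f i) * (⇑D)^[(i+j-n).toNat - s] (g j)) := by
      intro s _
      rw [Int.cast_sum, Finset.sum_mul]
      apply Finset.sum_congr rfl
      intro m _
      split_ifs with h
      · rfl
      · rw [Int.cast_zero, zero_mul]
    rw [Finset.sum_congr rfl L3]
    -- factor the p2-sum on the RHS
    have R3 : ∀ p1 ∈ Finset.Icc (n-N) N,
        (∑ p2 ∈ Finset.Icc (n-N) N,
          (if 0 ≤ p1 + p2 - n ∧ 0 ≤ j - p1 ∧ 0 ≤ i - p2 then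
            ((Ring.choose p1 (p1+p2-n).toNat *
              ((-1:ℤ)^j.natAbs * Ring.choose j (j-p1).toNat) *
              ((-1:ℤ)^i.natAbs * Ring.choose i (i-p2).toNat) : ℤ) : A) *
              ((⇑D)^[(j-p1).toNat] (g j) * (⇑D)^[(p1+i-n).toNat] (f i))
          else 0))
        = (((∑ p2 ∈ Finset.Icc (n-N) N,
            (if 0 ≤ p1 + p2 - n ∧ 0 ≤ j - p1 ∧ 0 ≤ i - p2 then
              Ring.choose p1 (p1+p2-n).toNat *
                ((-1:ℤ)^j.natAbs * Ring.choose j (j-p1).toNat) *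
                ((-1:ℤ)^i.natAbs * Ring.choose i (i-p2).toNat)
            else 0)) : ℤ) : A) *
            ((⇑D)^[(j-p1).toNat] (g j) * (⇑D)^[(p1+i-n).toNat] (f i)) := by
      intro p1 _
      rw [Int.cast_sum, Finset.sum_mul]
      apply Finset.sum_congr rfl
      intro p2 _
      split_ifs with h
      · rfl
      · rw [Int.cast_zero, zero_mul]
    rw [Finset.sum_congr rfl R3]
    -- reindex the RHS p1-sum as a range sum
    have eq1 : ∀ (F : ℤ → A), (∀ p, N < p → F p = 0) → (∀ p, p < n - i → F p = 0) →
        ∑ p1 ∈ Finset.Icc (n-N) N, F p1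
          = ∑ s ∈ Finset.range ((2*N - n).toNat + 1), F (n - i + s) := by
      intro F hF1 hF2
      have step1 : ∑ p1 ∈ Finset.Icc (n-N) N, F p1
          = ∑ p1 ∈ Finset.Icc (n-N) (2*N-i), F p1 := by
        apply Finset.sum_subset (Finset.Icc_subset_Icc le_rfl (by omega))
        intro p hp hp'
        simp only [Finset.mem_Icc] at hp hp'
        exact hF1 p (by omega)
      have step2 : ∑ p1 ∈ Finset.Icc (n-i) (2*N-i), F p1
          = ∑ p1 ∈ Finset.Icc (n-N) (2*N-i), F p1 := by
        apply Finset.sum_subset (Finset.Icc_subset_Icc (by omega) le_rfl)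
        intro p hp hp'
        simp only [Finset.mem_Icc] at hp hp'
        exact hF2 p (by omega)
      rw [step1, ← step2, sum_Icc_eq_range]
      have : (2*N - i + 1 - (n - i)).toNat = (2*N - n).toNat + 1 := by omega
      rw [this]
    rw [eq1 _ ?hup ?hdown]
    case hup =>
      intro p hp
      rw [Finset.sum_eq_zero fun q _ => if_neg (by omega), Int.cast_zero, zero_mul]
    case hdown =>
      intro p hp
      rw [Finset.sum_eq_zero fun q hq => by
        simp only [Finset.mem_Icc] at hq
        exact if_neg (by omega), Int.cast_zero, zero_mul]
    -- termwise comparison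
    apply Finset.sum_congr rfl
    intro s hs
    simp only [Finset.mem_range] at hs
    by_cases hcase : (s:ℤ) ≤ i + j - n
    · have hST : i + j - n = (s:ℤ) + ((i+j-n).toNat - s : ℕ) := by omega
      rw [CL_eval n N i j s ((i+j-n).toNat - s) hi.2 hj.2 hST,
        CR_eval n N i j s ((i+j-n).toNat - s) hi.1 hi.2 hj.2 hST]
      have h1 : (j-(n-i+(s:ℤ))).toNat = (i+j-n).toNat - s := by omega
      have h2 : ((n-i+(s:ℤ))+i-n).toNat = s := by omega
      rw [h1, h2]
      ring
    · have hz1 : ∀ m ∈ Finset.Icc n (2*N),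
          (if 0 ≤ i + j - m ∧ (s:ℤ) ≤ m - n then
            (-1:ℤ)^m.natAbs * Ring.choose m (m-n).toNat * (((m-n).toNat).choose s : ℤ) *
              Ring.choose i (i+j-m).toNat
          else 0) = 0 := by
        intro m hm
        simp only [Finset.mem_Icc] at hm
        exact if_neg (by omega)
      have hz2 : ∀ q ∈ Finset.Icc (n-N) N,
          (if 0 ≤ (n-i+(s:ℤ)) + q - n ∧ 0 ≤ j - (n-i+(s:ℤ)) ∧ 0 ≤ i - q then
            Ring.choose (n-i+(s:ℤ)) ((n-i+(s:ℤ))+q-n).toNat *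
              ((-1:ℤ)^j.natAbs * Ring.choose j (j-(n-i+(s:ℤ))).toNat) *
              ((-1:ℤ)^i.natAbs * Ring.choose i (i-q).toNat)
          else 0) = 0 := by
        intro q _
        exact if_neg (by omega)
      rw [Finset.sum_eq_zero hz1, Finset.sum_eq_zero hz2, Int.cast_zero, zero_mul, zero_mul]
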